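/- In dimension n = 3, the function J(λ) = sin(λ)/λ satisfies: the consistency equation λ cot λ = (6 - 2λ²)/(6 - λ²) has exactly one solution λ₀ in the open interval (0, √6). -/

import Mathlib

open Set

namespace RobinAux

/-- A function vanishing at `0` whose derivative is nonnegative on `[0, ∞)` is
nonnegative on `[0, ∞)`. -/
lemma nonneg_of_deriv (f f' : ℝ → ℝ) (hd : ∀ x, HasDerivAt f (f' x) x)
    (h0 : f 0 = 0) (hf' : ∀ x, 0 ≤ x → 0 ≤ f' x) {x : ℝ} (hx : 0 ≤ x) : 0 ≤ f x := by
  have hdiff : Differentiable ℝ f := fun y => (hd y).differentiableAt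
  have hmono : MonotoneOn f (Ici (0 : ℝ)) := by
    apply monotoneOn_of_deriv_nonneg (convex_Ici 0) hdiff.continuous.continuousOn
      (hdiff.differentiableOn)
    intro y hy
    rw [interior_Ici] at hy
    rw [(hd y).deriv]
    exact hf' y (le_of_lt hy)
  have := hmono (self_mem_Ici) hx hx
  rwa [h0] at this

lemma sin_ge_1 {x : ℝ} (hx : 0 ≤ x) : x - x ^ 3 / 6 ≤ Real.sin x := by
  have := nonneg_of_deriv (fun x => Real.sin x - (x - x ^ 3 / 6))
    (fun x => Real.cos x - (1 - x ^ 2 / 2))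
    (fun x => by
      have h1 : HasDerivAt (fun x : ℝ => x - x ^ 3 / 6) (1 - 3 * x ^ 2 / 6) x := by
        simpa using (hasDerivAt_id x).fun_sub ((hasDerivAt_pow 3 x).div_const 6)
      have := (Real.hasDerivAt_sin x).fun_sub h1
      refine this.congr_deriv ?_; ring)
    (by norm_num)
    (fun y _ => by have := Real.one_sub_sq_div_two_le_cos (x := y); linarith) hx
  linarith

lemma cos_le_2 {x : ℝ} (hx : 0 ≤ x) : Real.cos x ≤ 1 - x ^ 2 / 2 + x ^ 4 / 24 := by
  have := nonneg_of_deriv (fun x => (1 - x ^ 2 / 2 + x ^ 4 / 24) - Real.cos x)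
    (fun x => (-(2 * x / 2) + 4 * x ^ 3 / 24) - (-Real.sin x))
    (fun x => by
      have h1 : HasDerivAt (fun x : ℝ => 1 - x ^ 2 / 2 + x ^ 4 / 24)
          (-(2 * x / 2) + 4 * x ^ 3 / 24) x := by
        have h2 := ((hasDerivAt_pow 2 x).div_const 2)
        have h4 := ((hasDerivAt_pow 4 x).div_const 24)
        have := ((hasDerivAt_const x (1 : ℝ)).fun_sub h2).fun_add h4
        refine this.congr_deriv ?_ <;> push_cast <;> ring
      exact h1.sub (Real.hasDerivAt_cos x))
    (by norm_num)
    (fun y hy => by have := sin_ge_1 hy; nlinarith) hx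
  linarith

lemma sin_le_3 {x : ℝ} (hx : 0 ≤ x) : Real.sin x ≤ x - x ^ 3 / 6 + x ^ 5 / 120 := by
  have := nonneg_of_deriv (fun x => (x - x ^ 3 / 6 + x ^ 5 / 120) - Real.sin x)
    (fun x => (1 - 3 * x ^ 2 / 6 + 5 * x ^ 4 / 120) - Real.cos x)
    (fun x => by
      have h1 : HasDerivAt (fun x : ℝ => x - x ^ 3 / 6 + x ^ 5 / 120)
          (1 - 3 * x ^ 2 / 6 + 5 * x ^ 4 / 120) x := by
        have h3 := ((hasDerivAt_pow 3 x).div_const 6)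
        have h5 := ((hasDerivAt_pow 5 x).div_const 120)
        have := ((hasDerivAt_id x).fun_sub h3).fun_add h5
        refine this.congr_deriv ?_ <;> push_cast <;> ring
      exact h1.sub (Real.hasDerivAt_sin x))
    (by norm_num)
    (fun y hy => by have := cos_le_2 hy; nlinarith) hx
  linarith

lemma cos_ge_4 {x : ℝ} (hx : 0 ≤ x) :
    1 - x ^ 2 / 2 + x ^ 4 / 24 - x ^ 6 / 720 ≤ Real.cos x := by
  have := nonneg_of_deriv
    (fun x => Real.cos x - (1 - x ^ 2 / 2 + x ^ 4 / 24 - x ^ 6 / 720))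
    (fun x => -Real.sin x - (-(2 * x / 2) + 4 * x ^ 3 / 24 - 6 * x ^ 5 / 720))
    (fun x => by
      have h1 : HasDerivAt (fun x : ℝ => 1 - x ^ 2 / 2 + x ^ 4 / 24 - x ^ 6 / 720)
          (-(2 * x / 2) + 4 * x ^ 3 / 24 - 6 * x ^ 5 / 720) x := by
        have h2 := ((hasDerivAt_pow 2 x).div_const 2)
        have h4 := ((hasDerivAt_pow 4 x).div_const 24)
        have h6 := ((hasDerivAt_pow 6 x).div_const 720)
        have := (((hasDerivAt_const x (1 : ℝ)).fun_sub h2).fun_add h4).fun_sub h6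
        refine this.congr_deriv ?_ <;> push_cast <;> ring
      exact (Real.hasDerivAt_cos x).sub h1)
    (by norm_num)
    (fun y hy => by have := sin_le_3 hy; nlinarith) hx
  linarith

lemma sin_ge_5 {x : ℝ} (hx : 0 ≤ x) :
    x - x ^ 3 / 6 + x ^ 5 / 120 - x ^ 7 / 5040 ≤ Real.sin x := by
  have := nonneg_of_deriv
    (fun x => Real.sin x - (x - x ^ 3 / 6 + x ^ 5 / 120 - x ^ 7 / 5040))
    (fun x => Real.cos x - (1 - 3 * x ^ 2 / 6 + 5 * x ^ 4 / 120 - 7 * x ^ 6 / 5040))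
    (fun x => by
      have h1 : HasDerivAt (fun x : ℝ => x - x ^ 3 / 6 + x ^ 5 / 120 - x ^ 7 / 5040)
          (1 - 3 * x ^ 2 / 6 + 5 * x ^ 4 / 120 - 7 * x ^ 6 / 5040) x := by
        have h3 := ((hasDerivAt_pow 3 x).div_const 6)
        have h5 := ((hasDerivAt_pow 5 x).div_const 120)
        have h7 := ((hasDerivAt_pow 7 x).div_const 5040)
        have := (((hasDerivAt_id x).fun_sub h3).fun_add h5).fun_sub h7
        refine this.congr_deriv ?_ <;> push_cast <;> ring
      exact (Real.hasDerivAt_sin x).sub h1)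
    (by norm_num)
    (fun y hy => by have := cos_ge_4 hy; nlinarith) hx
  linarith

/-- The numerator function `F`. -/
noncomputable def F (x : ℝ) : ℝ := x * Real.cos x * (6 - x ^ 2) - Real.sin x * (6 - 2 * x ^ 2)

lemma F_hasDerivAt (x : ℝ) :
    HasDerivAt F ((x ^ 3 - 2 * x) * Real.sin x - x ^ 2 * Real.cos x) x := by
  have h1 : HasDerivAt (fun x : ℝ => x * Real.cos x) (Real.cos x + x * (-Real.sin x)) x := by
    simpa using (hasDerivAt_id x).fun_mul (Real.hasDerivAt_cos x)
  have h2 : HasDerivAt (fun x : ℝ => (6 : ℝ) - x ^ 2) (-(2 * x)) x := by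
    simpa using (hasDerivAt_const x (6 : ℝ)).fun_sub (hasDerivAt_pow 2 x)
  have h3 : HasDerivAt (fun x : ℝ => (6 : ℝ) - 2 * x ^ 2) (-(2 * (2 * x))) x := by
    simpa using (hasDerivAt_const x (6 : ℝ)).fun_sub ((hasDerivAt_pow 2 x).const_mul 2)
  have := (h1.fun_mul h2).fun_sub ((Real.hasDerivAt_sin x).fun_mul h3)
  refine this.congr_deriv ?_
  ring

lemma F_continuous : Continuous F := by
  unfold F; fun_prop

/-- Positivity of `K x = x * F' x - 3 * F x` on `(0, √6)`. -/
lemma K_pos {x : ℝ} (hx : 0 < x) (hx6 : x < Real.sqrt 6) :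
    0 < (x ^ 4 - 8 * x ^ 2 + 18) * Real.sin x - (18 * x - 2 * x ^ 3) * Real.cos x := by
  have hx2 : x ^ 2 < 6 := (Real.lt_sqrt hx.le).mp hx6
  have hP : 0 < x ^ 4 - 8 * x ^ 2 + 18 := by nlinarith [sq_nonneg (x ^ 2 - 4)]
  have hQ : 0 < 18 * x - 2 * x ^ 3 := by nlinarith
  have hpi3 : (3 : ℝ) < Real.pi := Real.pi_gt_three
  have hxpi : x < Real.pi := by
    have : Real.sqrt 6 < 3 := by
      rw [Real.sqrt_lt' (by norm_num)]; norm_num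
    linarith
  have hsin : 0 < Real.sin x := Real.sin_pos_of_pos_of_lt_pi hx hxpi
  rcases le_or_gt (Real.pi / 2) x with hge | hlt
  · -- here `cos x ≤ 0`
    have hcos : Real.cos x ≤ 0 :=
      Real.cos_nonpos_of_pi_div_two_le_of_le hge (by linarith [Real.pi_pos])
    nlinarith [mul_pos hP hsin, mul_nonneg hQ.le (neg_nonneg.mpr hcos)]
  · -- here `x < π/2 < 1.575`, use Taylor bounds
    have hx158 : x < 1.575 := by
      have : Real.pi < 3.15 := Real.pi_lt_d2
      linarith
    have hs := sin_ge_5 hx.le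
    have hc := cos_le_2 hx.le
    have h1 : 0 ≤ (Real.sin x - (x - x ^ 3 / 6 + x ^ 5 / 120 - x ^ 7 / 5040)) *
        (x ^ 4 - 8 * x ^ 2 + 18) := mul_nonneg (by linarith) hP.le
    have h2 : 0 ≤ ((1 - x ^ 2 / 2 + x ^ 4 / 24) - Real.cos x) * (18 * x - 2 * x ^ 3) :=
      mul_nonneg (by linarith) hQ.le
    -- the polynomial lower bound is `x ^ 5 * S (x ^ 2)` with
    -- `S t = 11/15 - 43/280 t + 5/504 t² - 1/5040 t³ > 0` for `0 < t ≤ 2.49`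
    have hL : 0 < (x - x ^ 3 / 6 + x ^ 5 / 120 - x ^ 7 / 5040) * (x ^ 4 - 8 * x ^ 2 + 18)
        - (1 - x ^ 2 / 2 + x ^ 4 / 24) * (18 * x - 2 * x ^ 3) := by
      have ht : x ^ 2 ≤ 2.49 := by nlinarith
      have hS : 0 < 3696 - 774 * x ^ 2 + 50 * (x ^ 2) ^ 2 - ((x ^ 2)) ^ 3 := by
        nlinarith [sq_nonneg (x ^ 2 - 8), sq_nonneg x, mul_nonneg (sq_nonneg x) (sq_nonneg x)]
      have hx5 : 0 < x ^ 5 := by positivity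
      have key : (x - x ^ 3 / 6 + x ^ 5 / 120 - x ^ 7 / 5040) * (x ^ 4 - 8 * x ^ 2 + 18)
          - (1 - x ^ 2 / 2 + x ^ 4 / 24) * (18 * x - 2 * x ^ 3)
          = x ^ 5 * ((3696 - 774 * x ^ 2 + 50 * (x ^ 2) ^ 2 - ((x ^ 2)) ^ 3) / 5040) := by
        ring
      rw [key]
      exact mul_pos hx5 (by linarith)
    nlinarith [h1, h2, hL]

/-- `F` has a positive derivative for `H := F / x³` on `(0, √6)`. -/
noncomputable def H (x : ℝ) : ℝ := F x / x ^ 3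

lemma H_hasDerivAt {x : ℝ} (hx : x ≠ 0) :
    HasDerivAt H (((x ^ 4 - 8 * x ^ 2 + 18) * Real.sin x - (18 * x - 2 * x ^ 3) * Real.cos x)
      / x ^ 4) x := by
  have h := (F_hasDerivAt x).div (hasDerivAt_pow 3 x) (pow_ne_zero 3 hx)
  refine h.congr_deriv ?_
  unfold F
  field_simp
  ring

lemma H_strictMono : StrictMonoOn H (Ioo 0 (Real.sqrt 6)) := by
  apply strictMonoOn_of_deriv_pos (convex_Ioo 0 (Real.sqrt 6))
  · apply ContinuousOn.div F_continuous.continuousOn (by fun_prop)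
    intro y hy
    exact pow_ne_zero 3 (ne_of_gt hy.1)
  · intro y hy
    rw [interior_Ioo] at hy
    rw [(H_hasDerivAt (ne_of_gt hy.1)).deriv]
    have h4 : 0 < y ^ 4 := pow_pos hy.1 4
    exact div_pos (K_pos hy.1 hy.2) h4

end RobinAux

/-- the consistency equation `λ cot λ = (6 - 2λ²)/(6 - λ²)` arising from
the Robin eigenvalue problem for the weighted Nash inequality in `ℝ³` has exactly one
solution `λ₀` in the open interval `(0, √6)`. -/
theorem robin_consistency_unique_solution :
    ∃! lam : ℝ, lam ∈ Ioo (0 : ℝ) (Real.sqrt 6) ∧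
      lam * (Real.cos lam / Real.sin lam) =
        (6 - 2 * lam ^ 2) / (6 - lam ^ 2) := by
  open RobinAux in
  -- basic facts about the interval
  have hpi3 : (3 : ℝ) < Real.pi := Real.pi_gt_three
  have hs63 : Real.sqrt 6 < 3 := by
    rw [Real.sqrt_lt' (by norm_num)]; norm_num
  have hsinpos : ∀ y ∈ Ioo (0 : ℝ) (Real.sqrt 6), 0 < Real.sin y := fun y hy =>
    Real.sin_pos_of_pos_of_lt_pi hy.1 (by linarith [hy.2])
  have hden : ∀ y ∈ Ioo (0 : ℝ) (Real.sqrt 6), 0 < 6 - y ^ 2 := fun y hy => by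
    have := (Real.lt_sqrt hy.1.le).mp hy.2
    linarith
  -- the equation is equivalent to F y = 0 on the interval
  have hiff : ∀ y ∈ Ioo (0 : ℝ) (Real.sqrt 6),
      (y * (Real.cos y / Real.sin y) = (6 - 2 * y ^ 2) / (6 - y ^ 2) ↔ F y = 0) := by
    intro y hy
    have hs := (hsinpos y hy).ne'
    have hd := (hden y hy).ne'
    unfold F
    rw [mul_div_assoc' y _ _, div_eq_div_iff hs hd]
    constructor
    · intro h; linarith
    · intro h; linarith
  -- existence via the intermediate value theorem on [1, √6]
  have h1mem : (1 : ℝ) < Real.sqrt 6 := by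
    rw [show (1 : ℝ) = Real.sqrt 1 by simp]
    exact Real.sqrt_lt_sqrt (by norm_num) (by norm_num)
  have hF1 : F 1 < 0 := by
    have hc : Real.cos 1 ≤ 1 - 1 ^ 2 / 2 + 1 ^ 4 / 24 := cos_le_2 (by norm_num)
    have hs : (1 : ℝ) - 1 ^ 3 / 6 ≤ Real.sin 1 := sin_ge_1 (by norm_num)
    unfold F
    norm_num at hc hs ⊢
    nlinarith
  have hF6 : 0 < F (Real.sqrt 6) := by
    have hsq : (Real.sqrt 6) ^ 2 = 6 := Real.sq_sqrt (by norm_num)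
    have h0 : (0 : ℝ) < Real.sqrt 6 := Real.sqrt_pos.mpr (by norm_num)
    have hs : 0 < Real.sin (Real.sqrt 6) :=
      Real.sin_pos_of_pos_of_lt_pi h0 (by linarith)
    unfold F
    rw [hsq]
    nlinarith
  have hsub : Ioo (F 1) (F (Real.sqrt 6)) ⊆ F '' Ioo 1 (Real.sqrt 6) :=
    intermediate_value_Ioo h1mem.le F_continuous.continuousOn
  obtain ⟨c, hcmem, hFc⟩ := hsub ⟨hF1, hF6⟩
  have hcIoo : c ∈ Ioo (0 : ℝ) (Real.sqrt 6) := ⟨by linarith [hcmem.1], hcmem.2⟩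
  refine ⟨c, ⟨hcIoo, (hiff c hcIoo).mpr hFc⟩, ?_⟩
  rintro y ⟨hyIoo, hyeq⟩
  have hFy : F y = 0 := (hiff y hyIoo).mp hyeq
  -- uniqueness via strict monotonicity of H = F / x³
  have hHy : H y = 0 := by unfold H; rw [hFy]; simp
  have hHc : H c = 0 := by unfold H; rw [hFc]; simp
  have := H_strictMono.injOn hyIoo hcIoo (by rw [hHy, hHc])
  exact this
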